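/- arXiv:2502.16465 — 3 statements merged into one kernel-verified Lean document; each statement's English description precedes it below -/
import Mathlib

section
/- Let G = (V,E) be a finite connected simple graph with graph distance d. For α ∈ [0,1), define the α-lazy random walk measure m_x^α by m_x^α(x) = α, m_x^α(v) = (1−α)/deg(x) for v adjacent to x, and 0 otherwise, and define κ_α(x,y) = 1 − W(m_x^α, m_y^α)/d(x,y). Then for any two distinct vertices x and y, κ_α(x,y) ≤ 2(1−α)/d(x,y). -/
open Finset

/-- A probability measure on a finite set, given as a density. -/
def IsProbMeasure {V : Type*} [Fintype V] (m : V → ℝ) : Prop :=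
  (∀ x, 0 ≤ m x) ∧ ∑ x, m x = 1

/-- A coupling between two probability measures on a finite set. -/
def IsCoupling {V : Type*} [Fintype V] (A : V × V → ℝ) (m₁ m₂ : V → ℝ) : Prop :=
  (∀ p, 0 ≤ A p) ∧ (∀ x, ∑ y, A (x, y) = m₁ x) ∧ (∀ y, ∑ x, A (x, y) = m₂ y)

/-- The Wasserstein-1 (transportation) distance between two probability measures on a
finite set, with respect to a cost `d`. -/
noncomputable def W {V : Type*} [Fintype V] (d : V → V → ℝ) (m₁ m₂ : V → ℝ) : ℝ :=
  sInf {c | ∃ A, IsCoupling A m₁ m₂ ∧ c = ∑ p : V × V, A p * d p.1 p.2}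

lemma W_symm {V : Type*} [Fintype V] (d : V → V → ℝ) (hd : ∀ x y, d x y = d y x)
    (m₁ m₂ : V → ℝ) : W d m₁ m₂ = W d m₂ m₁ := by
  have key : ∀ m₁ m₂ : V → ℝ,
      {c | ∃ A, IsCoupling A m₁ m₂ ∧ c = ∑ p : V × V, A p * d p.1 p.2} ⊆
      {c | ∃ A, IsCoupling A m₂ m₁ ∧ c = ∑ p : V × V, A p * d p.1 p.2} := by
    rintro m₁ m₂ c ⟨A, ⟨h0, h1, h2⟩, rfl⟩
    refine ⟨fun p => A (p.2, p.1), ⟨fun p => h0 _, fun x => h2 x, fun y => h1 y⟩, ?_⟩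
    refine Fintype.sum_equiv (Equiv.prodComm V V) _ _ ?_
    intro p
    simp [Equiv.prodComm, hd p.1 p.2]
  unfold W
  congr 1
  exact Set.Subset.antisymm (key m₁ m₂) (key m₂ m₁)

/-- The `α`-lazy random walk measure at a vertex `x` of a graph. -/
noncomputable def lazyWalk {V : Type*} [Fintype V] [DecidableEq V] (G : SimpleGraph V)
    [DecidableRel G.Adj] (α : ℝ) (x : V) : V → ℝ :=
  fun v => if v = x then α else if G.Adj x v then (1 - α) / (G.degree x) else 0

/-- The `α`-Ricci curvature `κ_α(x,y) = 1 - W(m_x^α, m_y^α)/d(x,y)`. -/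
noncomputable def kappaAlpha {V : Type*} [Fintype V] [DecidableEq V] (G : SimpleGraph V)
    [DecidableRel G.Adj] (α : ℝ) (x y : V) : ℝ :=
  1 - W (fun a b => (G.dist a b : ℝ)) (lazyWalk G α x) (lazyWalk G α y) / (G.dist x y)

lemma kappaAlpha_symm {V : Type*} [Fintype V] [DecidableEq V] (G : SimpleGraph V)
    [DecidableRel G.Adj] (α : ℝ) (x y : V) :
    kappaAlpha G α x y = kappaAlpha G α y x := by
  unfold kappaAlpha
  rw [W_symm _ (fun a b => by rw [SimpleGraph.dist_comm]),
    SimpleGraph.dist_comm]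

/-- The Lin–Lu–Yau Ricci curvature `κ_LLY(x,y) = lim_{α → 1⁻} κ_α(x,y)/(1-α)`. -/
noncomputable def kappaLLY {V : Type*} [Fintype V] [DecidableEq V] (G : SimpleGraph V)
    [DecidableRel G.Adj] (x y : V) : ℝ :=
  Filter.limUnder (nhdsWithin 1 (Set.Ico (0:ℝ) 1)) (fun α => kappaAlpha G α x y / (1 - α))

lemma kappaLLY_symm {V : Type*} [Fintype V] [DecidableEq V] (G : SimpleGraph V)
    [DecidableRel G.Adj] (x y : V) : kappaLLY G x y = kappaLLY G y x := by
  unfold kappaLLY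
  congr 1
  funext α
  rw [kappaAlpha_symm]

/-- Integral `α`-Ricci curvature `I^α_{κ₀}`: total amount of `α`-Ricci curvature below the
threshold `(1-α)κ₀`, summed over the edges of `G`. -/
noncomputable def IAlpha {V : Type*} [Fintype V] [DecidableEq V] (G : SimpleGraph V)
    [DecidableRel G.Adj] (α κ₀ : ℝ) : ℝ :=
  ∑ e ∈ G.edgeFinset,
    Sym2.lift ⟨fun x y => max 0 ((1 - α) * κ₀ - kappaAlpha G α x y),
      fun x y => by simp only []; rw [kappaAlpha_symm]⟩ e

/-- Integral Lin–Lu–Yau Ricci curvature `I_{κ₀}`: total amount of Lin–Lu–Yau Ricci curvature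
below the threshold `κ₀`, summed over the edges of `G`. -/
noncomputable def ILLY {V : Type*} [Fintype V] [DecidableEq V] (G : SimpleGraph V)
    [DecidableRel G.Adj] (κ₀ : ℝ) : ℝ :=
  ∑ e ∈ G.edgeFinset,
    Sym2.lift ⟨fun x y => max 0 (κ₀ - kappaLLY G x y),
      fun x y => by simp only []; rw [kappaLLY_symm]⟩ e

/-- The diameter of a finite graph. -/
noncomputable def gDiam {V : Type*} [Fintype V] (G : SimpleGraph V) : ℕ :=
  Finset.univ.sup fun p : V × V => G.dist p.1 p.2

lemma lazyWalk_sum {V : Type*} [Fintype V] [DecidableEq V] (G : SimpleGraph V)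
    [DecidableRel G.Adj] (α : ℝ) (x : V) (hdeg : 0 < G.degree x) :
    ∑ u, lazyWalk G α x u = 1 := by
  unfold lazyWalk
  have hfil : Finset.univ.filter (G.Adj x) = G.neighborFinset x := by
    ext u; simp
  calc ∑ u, (if u = x then α else if G.Adj x u then (1 - α) / (G.degree x) else 0)
      = ∑ u, ((if u = x then α else 0) + if G.Adj x u then (1 - α) / (G.degree x) else 0) := by
        apply Finset.sum_congr rfl; intro u _
        by_cases h1 : u = x
        · subst h1; simp [G.irrefl]
        · simp [h1]
    _ = α + (G.degree x : ℝ) * ((1 - α) / (G.degree x)) := by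
        rw [Finset.sum_add_distrib, Finset.sum_ite_eq' Finset.univ x (fun _ => α),
          ← Finset.sum_filter, hfil, Finset.sum_const]
        simp [SimpleGraph.card_neighborFinset_eq_degree, mul_comm]
    _ = 1 := by
        have : (G.degree x : ℝ) ≠ 0 := Nat.cast_ne_zero.mpr hdeg.ne'
        field_simp
        ring

lemma lazyWalk_expect {V : Type*} [Fintype V] [DecidableEq V] (G : SimpleGraph V)
    [DecidableRel G.Adj] (α : ℝ) (x : V) (hdeg : 0 < G.degree x) :
    ∑ u, lazyWalk G α x u * (G.dist x u : ℝ) = 1 - α := by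
  unfold lazyWalk
  have hfil : Finset.univ.filter (G.Adj x) = G.neighborFinset x := by
    ext u; simp
  calc ∑ u, (if u = x then α else if G.Adj x u then (1 - α) / (G.degree x) else 0) * (G.dist x u : ℝ)
      = ∑ u, (if G.Adj x u then (1 - α) / (G.degree x) else 0) := by
        apply Finset.sum_congr rfl; intro u _
        by_cases h1 : u = x
        · subst h1; simp [G.irrefl]
        · simp only [h1, if_false]
          by_cases h2 : G.Adj x u
          · simp [h2, SimpleGraph.dist_eq_one_iff_adj.mpr h2]
          · simp [h2]
    _ = (G.degree x : ℝ) * ((1 - α) / (G.degree x)) := by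
        rw [← Finset.sum_filter, hfil, Finset.sum_const]
        simp [mul_comm]
    _ = 1 - α := by
        have : (G.degree x : ℝ) ≠ 0 := Nat.cast_ne_zero.mpr hdeg.ne'
        field_simp

lemma lazyWalk_nonneg {V : Type*} [Fintype V] [DecidableEq V] (G : SimpleGraph V)
    [DecidableRel G.Adj] {α : ℝ} (hα : α ∈ Set.Ico (0:ℝ) 1) (x u : V) :
    0 ≤ lazyWalk G α x u := by
  unfold lazyWalk
  split
  · exact hα.1
  · split
    · exact div_nonneg (by linarith [hα.2]) (Nat.cast_nonneg _)
    · exact le_rfl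

lemma degree_pos_of_conn {V : Type*} [Fintype V] [DecidableEq V] (G : SimpleGraph V)
    [DecidableRel G.Adj] (hG : G.Connected) {x y : V} (hxy : x ≠ y) : 0 < G.degree x := by
  obtain ⟨w⟩ := hG.preconnected x y
  cases w with
  | nil => exact absurd rfl hxy
  | cons h _ => exact (SimpleGraph.degree_pos_iff_exists_adj _ _).mpr ⟨_, h⟩

/-- Lin–Lu–Yau, Lemma 2.2: `κ_α(x,y) ≤ 2(1-α)/d(x,y)`. -/
theorem stmt_2 {V : Type*} [Fintype V] [DecidableEq V] (G : SimpleGraph V)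
    [DecidableRel G.Adj] (hG : G.Connected) (α : ℝ) (hα : α ∈ Set.Ico (0:ℝ) 1)
    (x y : V) (hxy : x ≠ y) :
    kappaAlpha G α x y ≤ 2 * (1 - α) / (G.dist x y) := by
  have hdx : 0 < G.degree x := degree_pos_of_conn G hG hxy
  have hdy : 0 < G.degree y := degree_pos_of_conn G hG hxy.symm
  have hDn : 0 < G.dist x y := hG.pos_dist_of_ne hxy
  set D : ℝ := (G.dist x y : ℝ) with hD
  have hDpos : (0:ℝ) < D := by rw [hD]; exact_mod_cast hDn
  set mx := lazyWalk G α x with hmx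
  set my := lazyWalk G α y with hmy
  have hW : D - 2 * (1 - α) ≤ W (fun a b => (G.dist a b : ℝ)) mx my := by
    apply le_csInf
    · exact ⟨∑ p : V × V, (mx p.1 * my p.2) * (G.dist p.1 p.2 : ℝ),
        fun p => mx p.1 * my p.2,
        ⟨fun p => mul_nonneg (lazyWalk_nonneg G hα x _) (lazyWalk_nonneg G hα y _),
         fun u => by show ∑ v, mx u * my v = mx u; rw [← Finset.mul_sum, hmy, lazyWalk_sum G α y hdy, mul_one],
         fun v => by show ∑ u, mx u * my v = my v; rw [← Finset.sum_mul, hmx, lazyWalk_sum G α x hdx, one_mul]⟩, rfl⟩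
    · rintro c ⟨A, ⟨h0, h1, h2⟩, rfl⟩
      have hA1 : ∑ p : V × V, A p = 1 := by
        rw [Fintype.sum_prod_type]
        simp only [h1]
        exact lazyWalk_sum G α x hdx
      have hAx : ∑ p : V × V, A p * (G.dist x p.1 : ℝ) = 1 - α := by
        rw [Fintype.sum_prod_type]
        calc ∑ u, ∑ v, A (u, v) * (G.dist x u : ℝ)
            = ∑ u, mx u * (G.dist x u : ℝ) := by
              refine Finset.sum_congr rfl fun u _ => ?_
              rw [← Finset.sum_mul, h1]
          _ = 1 - α := lazyWalk_expect G α x hdx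
      have hAy : ∑ p : V × V, A p * (G.dist p.2 y : ℝ) = 1 - α := by
        rw [Fintype.sum_prod_type_right]
        calc ∑ v, ∑ u, A (u, v) * (G.dist v y : ℝ)
            = ∑ v, my v * (G.dist y v : ℝ) := by
              refine Finset.sum_congr rfl fun v _ => ?_
              rw [← Finset.sum_mul, h2, SimpleGraph.dist_comm]
          _ = 1 - α := lazyWalk_expect G α y hdy
      have key : ∑ p : V × V, A p * (D - (G.dist x p.1 : ℝ) - (G.dist p.2 y : ℝ))
          ≤ ∑ p : V × V, A p * (G.dist p.1 p.2 : ℝ) := by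
        refine Finset.sum_le_sum fun p _ => ?_
        refine mul_le_mul_of_nonneg_left ?_ (h0 p)
        have t1 : G.dist x y ≤ G.dist x p.1 + G.dist p.1 y := hG.dist_triangle
        have t2 : G.dist p.1 y ≤ G.dist p.1 p.2 + G.dist p.2 y := hG.dist_triangle
        have t1' : (G.dist x y : ℝ) ≤ (G.dist x p.1 : ℝ) + (G.dist p.1 y : ℝ) := by
          exact_mod_cast t1
        have t2' : (G.dist p.1 y : ℝ) ≤ (G.dist p.1 p.2 : ℝ) + (G.dist p.2 y : ℝ) := by
          exact_mod_cast t2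
        rw [hD]; linarith
      have expand : ∑ p : V × V, A p * (D - (G.dist x p.1 : ℝ) - (G.dist p.2 y : ℝ))
          = D - 2 * (1 - α) := by
        simp only [mul_sub]
        rw [Finset.sum_sub_distrib, Finset.sum_sub_distrib, ← Finset.sum_mul, hA1, hAx, hAy]
        ring
      linarith [key, expand.symm ▸ key]
  unfold kappaAlpha
  rw [← hD, ← hmx, ← hmy]
  have hdiv : (D - 2 * (1 - α)) / D ≤ W (fun a b => (G.dist a b : ℝ)) mx my / D := by
    gcongr
  have hsimp : (D - 2 * (1 - α)) / D = 1 - 2 * (1 - α) / D := by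
    field_simp
  linarith
end

section
/- Let G be a finite connected simple graph, α ∈ [0,1), and κ_0 ∈ ℝ. Define ρ^α_{κ_0}(x,y) = max{0, (1−α)κ_0 − κ_α(x,y)} for each edge xy, and I^α_{κ_0} = ∑_{xy ∈ E} ρ^α_{κ_0}(x,y). Then for any two distinct vertices x and y connected by a geodesic path x_0 = x, x_1, …, x_{d(x,y)} = y (consecutive vertices adjacent), one has κ_α(x,y) ≥ (1−α)κ_0 − I^α_{κ_0}/d(x,y). -/
open Finset

section WLemmas

variable {V : Type*} [Fintype V] [DecidableEq V] (d : V → V → ℝ) (m₁ m₂ m₃ : V → ℝ)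

lemma wset_bddBelow (hd : ∀ a b, 0 ≤ d a b) :
    BddBelow {c | ∃ A, IsCoupling A m₁ m₂ ∧ c = ∑ p : V × V, A p * d p.1 p.2} := by
  refine ⟨0, ?_⟩
  rintro c ⟨A, hA, rfl⟩
  exact Finset.sum_nonneg fun p _ => mul_nonneg (hA.1 p) (hd _ _)

lemma coupling_prod (h₁ : IsProbMeasure m₁) (h₂ : IsProbMeasure m₂) :
    IsCoupling (fun p : V × V => m₁ p.1 * m₂ p.2) m₁ m₂ := by
  refine ⟨fun p => mul_nonneg (h₁.1 _) (h₂.1 _), ?_, ?_⟩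
  · intro x; simp only []; rw [← Finset.mul_sum, h₂.2, mul_one]
  · intro y; simp only []; rw [← Finset.sum_mul, h₁.2, one_mul]

lemma wset_nonempty (h₁ : IsProbMeasure m₁) (h₂ : IsProbMeasure m₂) :
    Set.Nonempty {c | ∃ A, IsCoupling A m₁ m₂ ∧ c = ∑ p : V × V, A p * d p.1 p.2} :=
  ⟨_, _, coupling_prod m₁ m₂ h₁ h₂, rfl⟩

lemma W_le_cost (hd : ∀ a b, 0 ≤ d a b) {A} (hA : IsCoupling A m₁ m₂) :
    W d m₁ m₂ ≤ ∑ p : V × V, A p * d p.1 p.2 :=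
  csInf_le (wset_bddBelow d m₁ m₂ hd) ⟨A, hA, rfl⟩

lemma W_self_le (hd : ∀ a b, 0 ≤ d a b) (hd0 : ∀ a, d a a = 0) (h₁ : IsProbMeasure m₁) :
    W d m₁ m₁ ≤ 0 := by
  have hc : IsCoupling (fun p : V × V => if p.1 = p.2 then m₁ p.1 else 0) m₁ m₁ := by
    refine ⟨fun p => ?_, fun x => ?_, fun y => ?_⟩
    · simp only []; split
      · exact h₁.1 _
      · exact le_refl 0
    · simp
    · simp only []
      rw [Finset.sum_congr rfl (fun z _ => ?_), Finset.sum_ite_eq' Finset.univ y (fun _ => m₁ y)]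
      · simp
      · by_cases h : z = y <;> simp [h]
  refine le_trans (W_le_cost d m₁ m₁ hd hc) (le_of_eq ?_)
  refine Finset.sum_eq_zero fun p _ => ?_
  by_cases h : p.1 = p.2
  · simp [h, hd0]
  · simp [h]

end WLemmas
section Tri
set_option linter.unusedSectionVars false
variable {V : Type*} [Fintype V] [DecidableEq V] (d : V → V → ℝ) (m₁ m₂ m₃ : V → ℝ)

lemma W_triangle' (hd : ∀ a b, 0 ≤ d a b) (htri : ∀ a b c, d a c ≤ d a b + d b c)
    (h₁ : IsProbMeasure m₁) (h₂ : IsProbMeasure m₂) (h₃ : IsProbMeasure m₃)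
    {A B : V × V → ℝ} (hA : IsCoupling A m₁ m₂) (hB : IsCoupling B m₂ m₃) :
    W d m₁ m₃ ≤ (∑ p : V × V, A p * d p.1 p.2) + (∑ p : V × V, B p * d p.1 p.2) := by
  classical
  set q : V → ℝ := fun y => if m₂ y = 0 then 0 else (m₂ y)⁻¹ with hq
  have hq0 : ∀ y, 0 ≤ q y := by
    intro y; rw [hq]; dsimp only; split
    · exact le_refl 0
    · exact inv_nonneg.mpr (h₂.1 y)
  have hA0 : ∀ x y, m₂ y = 0 → A (x, y) = 0 := by
    intro x y h
    have h1 : A (x, y) ≤ m₂ y := by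
      rw [← hA.2.2 y]
      exact Finset.single_le_sum (fun z _ => hA.1 (z, y)) (Finset.mem_univ x)
    exact le_antisymm (h ▸ h1) (hA.1 _)
  have hB0 : ∀ y z, m₂ y = 0 → B (y, z) = 0 := by
    intro y z h
    have h1 : B (y, z) ≤ m₂ y := by
      rw [← hB.2.1 y]
      exact Finset.single_le_sum (fun w _ => hB.1 (y, w)) (Finset.mem_univ z)
    exact le_antisymm (h ▸ h1) (hB.1 _)
  have hqm : ∀ y, m₂ y ≠ 0 → q y * m₂ y = 1 := by
    intro y h; rw [hq]; simp [h, inv_mul_cancel₀ h]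
  have hAq : ∀ x y, A (x, y) * q y * m₂ y = A (x, y) := by
    intro x y
    by_cases h : m₂ y = 0
    · simp [hA0 x y h]
    · rw [mul_assoc, hqm y h, mul_one]
  have hBq : ∀ y z, m₂ y * q y * B (y, z) = B (y, z) := by
    intro y z
    by_cases h : m₂ y = 0
    · simp [hB0 y z h]
    · rw [mul_comm (m₂ y), hqm y h, one_mul]
  set C : V × V → ℝ := fun p => ∑ y, A (p.1, y) * q y * B (y, p.2) with hC
  have hCc : IsCoupling C m₁ m₃ := by
    refine ⟨fun p => Finset.sum_nonneg fun y _ =>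
      mul_nonneg (mul_nonneg (hA.1 _) (hq0 y)) (hB.1 _), fun x => ?_, fun z => ?_⟩
    · rw [hC]; dsimp only
      rw [Finset.sum_comm]
      calc ∑ y, ∑ z, A (x, y) * q y * B (y, z)
          = ∑ y, A (x, y) * q y * m₂ y := by
            refine Finset.sum_congr rfl fun y _ => ?_
            rw [← Finset.mul_sum, hB.2.1]
        _ = ∑ y, A (x, y) := Finset.sum_congr rfl fun y _ => hAq x y
        _ = m₁ x := hA.2.1 x
    · rw [hC]; dsimp only
      rw [Finset.sum_comm]
      calc ∑ y, ∑ x, A (x, y) * q y * B (y, z)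
          = ∑ y, m₂ y * q y * B (y, z) := by
            refine Finset.sum_congr rfl fun y _ => ?_
            rw [← Finset.sum_mul, ← Finset.sum_mul, hA.2.2]
        _ = ∑ y, B (y, z) := Finset.sum_congr rfl fun y _ => hBq y z
        _ = m₃ z := hB.2.2 z
  refine le_trans (W_le_cost d m₁ m₃ hd hCc) ?_
  rw [Fintype.sum_prod_type, Fintype.sum_prod_type, Fintype.sum_prod_type]
  calc ∑ x, ∑ z, C (x, z) * d x z
      ≤ ∑ x, ∑ z, ∑ y, A (x, y) * q y * B (y, z) * (d x y + d y z) := by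
        refine Finset.sum_le_sum fun x _ => Finset.sum_le_sum fun z _ => ?_
        rw [hC]; dsimp only
        rw [Finset.sum_mul]
        refine Finset.sum_le_sum fun y _ => ?_
        exact mul_le_mul_of_nonneg_left (htri x y z)
          (mul_nonneg (mul_nonneg (hA.1 _) (hq0 y)) (hB.1 _))
    _ = ∑ x, ∑ y, ∑ z, A (x, y) * q y * B (y, z) * (d x y + d y z) := by
        exact Finset.sum_congr rfl fun x _ => Finset.sum_comm
    _ = ∑ x, ∑ y, (A (x, y) * d x y + A (x, y) * q y * (∑ z, B (y, z) * d y z)) := by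
        refine Finset.sum_congr rfl fun x _ => Finset.sum_congr rfl fun y _ => ?_
        rw [show (∑ z, A (x, y) * q y * B (y, z) * (d x y + d y z))
            = (A (x, y) * q y * ∑ z, B (y, z)) * d x y
              + A (x, y) * q y * (∑ z, B (y, z) * d y z) by
          rw [Finset.mul_sum, Finset.mul_sum, Finset.sum_mul, ← Finset.sum_add_distrib]
          exact Finset.sum_congr rfl fun z _ => by ring]
        rw [hB.2.1, hAq]
    _ = (∑ x, ∑ y, A (x, y) * d x y)
          + (∑ x, ∑ y, A (x, y) * q y * (∑ z, B (y, z) * d y z)) := by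
        simp only [Finset.sum_add_distrib]
    _ = (∑ x, ∑ y, A (x, y) * d x y) + (∑ y, ∑ z, B (y, z) * d y z) := by
        congr 1
        rw [Finset.sum_comm]
        refine Finset.sum_congr rfl fun y _ => ?_
        rw [← Finset.sum_mul, ← Finset.sum_mul, hA.2.2]
        by_cases h : m₂ y = 0
        · rw [h, zero_mul, zero_mul]
          exact (Finset.sum_eq_zero fun z _ => by rw [hB0 y z h, zero_mul]).symm
        · rw [mul_comm (m₂ y) (q y), hqm y h, one_mul]

end Tri
section Chain
set_option linter.unusedSectionVars false
variable {V : Type*} [Fintype V] [DecidableEq V] (d : V → V → ℝ) (m₁ m₂ m₃ : V → ℝ)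

lemma W_triangle (hd : ∀ a b, 0 ≤ d a b) (htri : ∀ a b c, d a c ≤ d a b + d b c)
    (h₁ : IsProbMeasure m₁) (h₂ : IsProbMeasure m₂) (h₃ : IsProbMeasure m₃) :
    W d m₁ m₃ ≤ W d m₁ m₂ + W d m₂ m₃ := by
  have key : ∀ b ∈ {c | ∃ B, IsCoupling B m₂ m₃ ∧ c = ∑ p : V × V, B p * d p.1 p.2},
      W d m₁ m₃ - b ≤ W d m₁ m₂ := by
    rintro b ⟨B, hB, rfl⟩
    refine le_csInf (wset_nonempty d m₁ m₂ h₁ h₂) ?_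
    rintro a ⟨A, hA, rfl⟩
    rw [sub_le_iff_le_add]
    exact W_triangle' d m₁ m₂ m₃ hd htri h₁ h₂ h₃ (A := A) (B := B) hA hB
  have h2 : W d m₁ m₃ - W d m₁ m₂ ≤ W d m₂ m₃ := by
    refine le_csInf (wset_nonempty d m₂ m₃ h₂ h₃) ?_
    intro b hb
    have := key b hb
    linarith
  linarith

lemma W_chain (hd : ∀ a b, 0 ≤ d a b) (hd0 : ∀ a, d a a = 0)
    (htri : ∀ a b c, d a c ≤ d a b + d b c) (m : ℕ → V → ℝ)
    (hm : ∀ i, IsProbMeasure (m i)) :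
    ∀ n, W d (m 0) (m n) ≤ ∑ i ∈ Finset.range n, W d (m i) (m (i + 1)) := by
  intro n
  induction n with
  | zero => simpa using W_self_le d (m 0) hd hd0 (hm 0)
  | succ n ih =>
    rw [Finset.sum_range_succ]
    calc W d (m 0) (m (n + 1)) ≤ W d (m 0) (m n) + W d (m n) (m (n + 1)) :=
          W_triangle d (m 0) (m n) (m (n + 1)) hd htri (hm 0) (hm n) (hm (n + 1))
      _ ≤ _ := add_le_add ih le_rfl
end Chain
section GraphAux
variable {V : Type*} [Fintype V] [DecidableEq V] (G : SimpleGraph V) [DecidableRel G.Adj]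

lemma degree_pos_of_connected (hG : G.Connected) (hcard : 1 < Fintype.card V) (x : V) :
    0 < G.degree x := by
  rw [SimpleGraph.degree_pos_iff_exists_adj]
  obtain ⟨w, hw⟩ := Fintype.exists_ne_of_one_lt_card hcard x
  obtain ⟨P, hP⟩ := hG.exists_walk_length_eq_dist x w
  cases P with
  | nil =>
    exact absurd (hP.symm) (by simpa using (hG.pos_dist_of_ne hw.symm).ne')
  | cons h q => exact ⟨_, h⟩

lemma lazyWalk_prob (hG : G.Connected) (hcard : 1 < Fintype.card V)
    {α : ℝ} (hα : α ∈ Set.Ico (0:ℝ) 1) (x : V) : IsProbMeasure (lazyWalk G α x) := by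
  have hdeg : 0 < G.degree x := degree_pos_of_connected G hG hcard x
  have hdeg' : (G.degree x : ℝ) ≠ 0 := Nat.cast_ne_zero.mpr hdeg.ne'
  constructor
  · intro v
    unfold lazyWalk
    split
    · exact hα.1
    split
    · exact div_nonneg (by linarith [hα.2]) (Nat.cast_nonneg _)
    · exact le_refl 0
  · unfold lazyWalk
    rw [← Finset.add_sum_erase _ _ (Finset.mem_univ x), if_pos rfl]
    have h1 : ∑ v ∈ Finset.univ.erase x,
        (if v = x then α else if G.Adj x v then (1 - α) / (G.degree x) else 0)
        = ∑ v, (if G.Adj x v then (1 - α) / (G.degree x) else 0) := by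
      rw [Finset.sum_congr rfl (fun v hv => if_neg (Finset.mem_erase.mp hv).1)]
      exact Finset.sum_erase _ (by simp)
    rw [h1, ← Finset.sum_filter, ← SimpleGraph.neighborFinset_eq_filter,
      Finset.sum_const, ← SimpleGraph.degree, nsmul_eq_mul, mul_div_cancel₀ _ hdeg']
    ring

end GraphAux
/-- Key lemma with integral curvature: along a geodesic,
`κ_α(x,y) ≥ (1-α)κ₀ - I^α_{κ₀}/d(x,y)`. -/
theorem stmt_3 {V : Type*} [Fintype V] [DecidableEq V] (G : SimpleGraph V)
    [DecidableRel G.Adj] (hG : G.Connected) (α : ℝ) (hα : α ∈ Set.Ico (0:ℝ) 1)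
    (κ₀ : ℝ) (x y : V) (hxy : x ≠ y) (p : ℕ → V)
    (hp0 : p 0 = x) (hpk : p (G.dist x y) = y)
    (hadj : ∀ i < G.dist x y, G.Adj (p i) (p (i + 1))) :
    kappaAlpha G α x y ≥ (1 - α) * κ₀ - IAlpha G α κ₀ / (G.dist x y) := by
  classical
  set k := G.dist x y with hk
  have hk0 : 0 < k := hG.pos_dist_of_ne hxy
  have hkr : (0:ℝ) < (k:ℝ) := by exact_mod_cast hk0
  have hcard : 1 < Fintype.card V := Fintype.one_lt_card_iff.mpr ⟨x, y, hxy⟩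
  have hd : ∀ a b : V, 0 ≤ (G.dist a b : ℝ) := fun a b => Nat.cast_nonneg _
  have hd0 : ∀ a : V, (G.dist a a : ℝ) = 0 := fun a => by simp
  have htri : ∀ a b c : V, (G.dist a c : ℝ) ≤ (G.dist a b : ℝ) + (G.dist b c : ℝ) :=
    fun a b c => by exact_mod_cast hG.dist_triangle
  have hprob : ∀ v : V, IsProbMeasure (lazyWalk G α v) :=
    fun v => lazyWalk_prob G hG hcard hα v
  -- distances along the path
  have hdist : ∀ n i, i + n ≤ k → G.dist (p i) (p (i + n)) ≤ n := by
    intro n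
    induction n with
    | zero => intro i _; simp
    | succ n ih =>
      intro i h
      have h1 := ih i (by omega)
      have h2 : G.dist (p (i + n)) (p (i + n + 1)) = 1 :=
        SimpleGraph.dist_eq_one_iff_adj.mpr (hadj (i + n) (by omega))
      calc G.dist (p i) (p (i + (n + 1)))
          ≤ G.dist (p i) (p (i + n)) + G.dist (p (i + n)) (p (i + n + 1)) := by
            rw [show i + (n + 1) = i + n + 1 from rfl]; exact hG.dist_triangle
        _ ≤ n + 1 := by omega
  have hne : ∀ i j, i < j → j ≤ k → p i ≠ p j := by
    intro i j hij hjk hEq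
    have h1 : G.dist (p 0) (p i) ≤ i := by simpa using hdist i 0 (by omega)
    have h2 : G.dist (p j) (p (j + (k - j))) ≤ k - j := hdist (k - j) j (by omega)
    rw [show j + (k - j) = k from by omega] at h2
    have h3 : G.dist (p 0) (p k) = k := by rw [hp0, hpk]
    have h4 : G.dist (p i) (p k) ≤ k - j := by rw [hEq]; exact h2
    have h5 : G.dist (p 0) (p k) ≤ G.dist (p 0) (p i) + G.dist (p i) (p k) :=
      hG.dist_triangle
    omega
  -- the edge defect function
  set F : Sym2 V → ℝ := Sym2.lift ⟨fun a b => max 0 ((1 - α) * κ₀ - kappaAlpha G α a b),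
      fun a b => by simp only []; rw [kappaAlpha_symm]⟩ with hF
  have hF0 : ∀ e, 0 ≤ F e := by
    intro e
    induction e with
    | _ a b => rw [hF]; exact le_max_left _ _
  have hρ : ∀ a b, (1 - α) * κ₀ - kappaAlpha G α a b ≤ F s(a, b) := by
    intro a b; rw [hF]; exact le_max_right _ _
  -- sum of defects over path edges is at most IAlpha
  have hsum : ∑ i ∈ Finset.range k, F s(p i, p (i + 1)) ≤ IAlpha G α κ₀ := by
    have hinj : ∀ i ∈ Finset.range k, ∀ j ∈ Finset.range k,
        s(p i, p (i + 1)) = s(p j, p (j + 1)) → i = j := by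
      intro i hi j hj h
      rw [Finset.mem_range] at hi hj
      by_contra hij
      rcases Sym2.eq_iff.mp h with ⟨e1, e2⟩ | ⟨e1, e2⟩
      · rcases Nat.lt_or_ge i j with hlt | hge
        · exact hne i j hlt (by omega) e1
        · exact hne j i (by omega) (by omega) e1.symm
      · rcases Nat.lt_or_ge i (j + 1) with hlt | hge
        · exact hne i (j + 1) hlt (by omega) e1
        · exact hne j (i + 1) (by omega) (by omega) e2.symm
    rw [show (∑ i ∈ Finset.range k, F s(p i, p (i + 1)))
        = ∑ e ∈ (Finset.range k).image (fun i => s(p i, p (i + 1))), F e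
      from (Finset.sum_image hinj).symm]
    refine Finset.sum_le_sum_of_subset_of_nonneg ?_ (fun e _ _ => hF0 e)
    intro e he
    rw [Finset.mem_image] at he
    obtain ⟨i, hi, rfl⟩ := he
    rw [Finset.mem_range] at hi
    rw [SimpleGraph.mem_edgeFinset, SimpleGraph.mem_edgeSet]
    exact hadj i hi
  -- W bound on each edge
  have hWedge : ∀ i < k, W (fun a b => (G.dist a b : ℝ)) (lazyWalk G α (p i))
      (lazyWalk G α (p (i + 1))) ≤ (1 - (1 - α) * κ₀) + F s(p i, p (i + 1)) := by
    intro i hik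
    have hone : (G.dist (p i) (p (i + 1)) : ℝ) = 1 := by
      exact_mod_cast SimpleGraph.dist_eq_one_iff_adj.mpr (hadj i hik)
    have hκ : kappaAlpha G α (p i) (p (i + 1)) = 1 - W (fun a b => (G.dist a b : ℝ))
        (lazyWalk G α (p i)) (lazyWalk G α (p (i + 1))) := by
      unfold kappaAlpha
      rw [hone, div_one]
    have := hρ (p i) (p (i + 1))
    rw [hκ] at this
    linarith
  -- chain bound
  have hWxy : W (fun a b => (G.dist a b : ℝ)) (lazyWalk G α x) (lazyWalk G α y)
      ≤ ∑ i ∈ Finset.range k, W (fun a b => (G.dist a b : ℝ)) (lazyWalk G α (p i))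
        (lazyWalk G α (p (i + 1))) := by
    have := W_chain (fun a b => (G.dist a b : ℝ)) hd hd0 htri
      (fun i => lazyWalk G α (p i)) (fun i => hprob (p i)) k
    rwa [hp0, hpk] at this
  have hWtot : W (fun a b => (G.dist a b : ℝ)) (lazyWalk G α x) (lazyWalk G α y)
      ≤ (k : ℝ) * (1 - (1 - α) * κ₀) + IAlpha G α κ₀ := by
    calc W (fun a b => (G.dist a b : ℝ)) (lazyWalk G α x) (lazyWalk G α y)
        ≤ ∑ i ∈ Finset.range k, W (fun a b => (G.dist a b : ℝ)) (lazyWalk G α (p i))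
          (lazyWalk G α (p (i + 1))) := hWxy
      _ ≤ ∑ i ∈ Finset.range k, ((1 - (1 - α) * κ₀) + F s(p i, p (i + 1))) :=
          Finset.sum_le_sum fun i hi => hWedge i (Finset.mem_range.mp hi)
      _ = (k : ℝ) * (1 - (1 - α) * κ₀) + ∑ i ∈ Finset.range k, F s(p i, p (i + 1)) := by
          rw [Finset.sum_add_distrib, Finset.sum_const, Finset.card_range, nsmul_eq_mul]
      _ ≤ _ := by linarith [hsum]
  -- conclude
  unfold kappaAlpha
  rw [ge_iff_le, ← hk]
  have h6 : W (fun a b => (G.dist a b : ℝ)) (lazyWalk G α x) (lazyWalk G α y) / (k : ℝ)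
      ≤ (1 - (1 - α) * κ₀) + IAlpha G α κ₀ / (k : ℝ) := by
    rw [div_le_iff₀ hkr]
    have he : ((1 - (1 - α) * κ₀) + IAlpha G α κ₀ / (k : ℝ)) * (k : ℝ)
        = (k : ℝ) * (1 - (1 - α) * κ₀) + IAlpha G α κ₀ := by
      field_simp
    rw [he]
    exact hWtot
  linarith
end

section
/- Let G be a finite connected simple graph and x ≠ y vertices. Partition the neighborhood of y as Γ_x^+(y) = {v ~ y : d(x,v) = d(x,y)+1}, Γ_x^0(y) = {v ~ y : d(x,v) = d(x,y)}, Γ_x^-(y) = {v ~ y : d(x,v) = d(x,y)−1}. Then κ_LLY(x,y) ≤ (1 + (|Γ_x^-(y)| − |Γ_x^+(y)|)/deg(y)) / d(x,y). -/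
open Finset

section Aux
variable {V : Type*} [Fintype V] [DecidableEq V] (G : SimpleGraph V) [DecidableRel G.Adj]

lemma lazyWalk_eq (α : ℝ) (x v : V) :
    lazyWalk G α x v = α * (if v = x then 1 else 0)
      + (if G.Adj x v then (1 - α) / (G.degree x) else 0) := by
  unfold lazyWalk
  by_cases h : v = x
  · subst h; simp [G.irrefl]
  · simp [h]

lemma lazyWalk_sum_mul (α : ℝ) (x : V) (f : V → ℝ) :
    ∑ v, lazyWalk G α x v * f v
      = α * f x + (1 - α) / (G.degree x) * ∑ v ∈ G.neighborFinset x, f v := by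
  simp only [lazyWalk_eq, add_mul, Finset.sum_add_distrib]
  congr 1
  · rw [Finset.sum_congr rfl (g := fun v => if v = x then α * f x else 0)
      (fun v _ => by by_cases h : v = x <;> simp [h])]
    simp
  · rw [Finset.sum_congr rfl
      (g := fun v => if G.Adj x v then (1 - α) / (G.degree x) * f v else 0)
      (fun v _ => by by_cases h : G.Adj x v <;> simp [h]),
      ← Finset.sum_filter, ← SimpleGraph.neighborFinset_eq_filter, Finset.mul_sum]

lemma lazyWalk_nonneg_s9 {α : ℝ} (hα0 : 0 ≤ α) (hα1 : α ≤ 1) (x v : V) :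
    0 ≤ lazyWalk G α x v := by
  unfold lazyWalk
  split_ifs
  · exact hα0
  · exact div_nonneg (by linarith) (Nat.cast_nonneg _)
  · exact le_refl 0

lemma lazyWalk_sum_one (α : ℝ) (x : V) (hx : G.degree x ≠ 0) :
    ∑ v, lazyWalk G α x v = 1 := by
  have h := lazyWalk_sum_mul G α x (fun _ => 1)
  simp only [mul_one] at h
  rw [h, Finset.sum_const, SimpleGraph.card_neighborFinset_eq_degree, nsmul_eq_mul, mul_one]
  have : (G.degree x : ℝ) ≠ 0 := Nat.cast_ne_zero.mpr hx
  field_simp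
  ring

lemma lazyWalk_affine (a b t s : ℝ) (hts : t + s = 1) (x v : V) :
    lazyWalk G (t * a + s * b) x v = t * lazyWalk G a x v + s * lazyWalk G b x v := by
  unfold lazyWalk
  split_ifs with h h'
  · ring
  · rw [← mul_div_assoc, ← mul_div_assoc, ← add_div]
    congr 1
    linear_combination -hts
  · ring

end Aux

/-- Lin–Lu–Yau, Lemma 4.4: upper bound on `κ_LLY` via the neighborhood partition of `y`. -/
theorem stmt_9 {V : Type*} [Fintype V] [DecidableEq V] (G : SimpleGraph V)
    [DecidableRel G.Adj] (hG : G.Connected) (x y : V) (hxy : x ≠ y) :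
    kappaLLY G x y ≤
      (1 + ((((G.neighborFinset y).filter (fun v => G.dist x v = G.dist x y - 1)).card : ℝ)
            - (((G.neighborFinset y).filter (fun v => G.dist x v = G.dist x y + 1)).card : ℝ))
          / (G.degree y)) / (G.dist x y) := by
  classical
  have hdeg : ∀ v w : V, v ≠ w → 0 < G.degree v := by
    intro v w hvw
    rw [SimpleGraph.degree_pos_iff_exists_adj]
    obtain ⟨p⟩ := hG.preconnected v w
    cases p with
    | nil => exact absurd rfl hvw
    | cons h _ => exact ⟨_, h⟩
  have hdx0 : (0:ℝ) < G.degree x := by exact_mod_cast hdeg x y hxy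
  have hdy0 : (0:ℝ) < G.degree y := by exact_mod_cast hdeg y x hxy.symm
  have hdyne : (G.degree y : ℝ) ≠ 0 := hdy0.ne'
  have hn0 : 0 < G.dist x y := hG.pos_dist_of_ne hxy
  have hnR : (0:ℝ) < G.dist x y := by exact_mod_cast hn0
  set cm : ℝ := (((G.neighborFinset y).filter
      (fun v => G.dist x v = G.dist x y - 1)).card : ℝ) with hcm
  set cp : ℝ := (((G.neighborFinset y).filter
      (fun v => G.dist x v = G.dist x y + 1)).card : ℝ) with hcp
  set B : ℝ := (1 + (cm - cp) / (G.degree y)) / (G.dist x y) with hB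
  set S : ℝ → Set ℝ := fun α =>
    {c | ∃ A, IsCoupling A (lazyWalk G α x) (lazyWalk G α y) ∧
        c = ∑ p : V × V, A p * (G.dist p.1 p.2 : ℝ)} with hSdef
  have hSne : ∀ α ∈ Set.Icc (0:ℝ) 1, (S α).Nonempty := by
    intro α hα
    refine ⟨_, fun p => lazyWalk G α x p.1 * lazyWalk G α y p.2, ⟨?_, ?_, ?_⟩, rfl⟩
    · exact fun p => mul_nonneg (lazyWalk_nonneg_s9 G hα.1 hα.2 _ _)
        (lazyWalk_nonneg_s9 G hα.1 hα.2 _ _)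
    · intro a
      dsimp only
      rw [← Finset.mul_sum, lazyWalk_sum_one G α y (hdeg y x hxy.symm).ne', mul_one]
    · intro b
      dsimp only
      rw [← Finset.sum_mul, lazyWalk_sum_one G α x (hdeg x y hxy).ne', one_mul]
  have hSbdd : ∀ α : ℝ, BddBelow (S α) := by
    intro α
    refine ⟨0, ?_⟩
    rintro c ⟨A, hA, rfl⟩
    exact Finset.sum_nonneg fun p _ => mul_nonneg (hA.1 p) (Nat.cast_nonneg _)
  have tri : ∀ a b : V, (G.dist x b : ℝ) - (G.dist x a : ℝ) ≤ (G.dist a b : ℝ) := by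
    intro a b
    have h := hG.dist_triangle (u := x) (v := a) (w := b)
    have h' : (G.dist x b : ℝ) ≤ (G.dist x a : ℝ) + (G.dist a b : ℝ) := by exact_mod_cast h
    linarith
  have hkey : ∀ (A : V × V → ℝ) (m₁ m₂ : V → ℝ), IsCoupling A m₁ m₂ →
      ∑ v, m₂ v * (G.dist x v : ℝ) - ∑ v, m₁ v * (G.dist x v : ℝ)
        ≤ ∑ p : V × V, A p * (G.dist p.1 p.2 : ℝ) := by
    rintro A m₁ m₂ ⟨h0, h1, h2⟩
    have e1 : ∑ v, m₁ v * (G.dist x v : ℝ) = ∑ p : V × V, A p * (G.dist x p.1 : ℝ) := by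
      rw [Fintype.sum_prod_type]
      refine Finset.sum_congr rfl fun a _ => ?_
      rw [← h1 a, Finset.sum_mul]
    have e2 : ∑ v, m₂ v * (G.dist x v : ℝ) = ∑ p : V × V, A p * (G.dist x p.2 : ℝ) := by
      rw [Fintype.sum_prod_type_right]
      refine Finset.sum_congr rfl fun b _ => ?_
      rw [← h2 b, Finset.sum_mul]
    rw [e1, e2, ← Finset.sum_sub_distrib]
    refine Finset.sum_le_sum fun p _ => ?_
    rw [← mul_sub]
    exact mul_le_mul_of_nonneg_left (tri p.1 p.2) (h0 p)
  have hsumx : ∀ α : ℝ, ∑ v, lazyWalk G α x v * (G.dist x v : ℝ) = 1 - α := by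
    intro α
    rw [lazyWalk_sum_mul, SimpleGraph.dist_self]
    have h : ∑ v ∈ G.neighborFinset x, (G.dist x v : ℝ) = G.degree x := by
      rw [Finset.sum_congr rfl (g := fun _ => (1:ℝ)) fun v hv => by
        rw [SimpleGraph.mem_neighborFinset] at hv
        simp [SimpleGraph.dist_eq_one_iff_adj.mpr hv]]
      rw [Finset.sum_const, SimpleGraph.card_neighborFinset_eq_degree, nsmul_eq_mul, mul_one]
    rw [h]
    have : (G.degree x : ℝ) ≠ 0 := hdx0.ne'
    field_simp
    push_cast
    ring
  have hNy : ∑ v ∈ G.neighborFinset y, (G.dist x v : ℝ)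
      = (G.dist x y : ℝ) * G.degree y + cp - cm := by
    have hsplit : ∀ v ∈ G.neighborFinset y,
        (G.dist x v : ℝ) = (G.dist x y : ℝ)
          + ((if G.dist x v = G.dist x y + 1 then (1:ℝ) else 0)
             - (if G.dist x v = G.dist x y - 1 then (1:ℝ) else 0)) := by
      intro v hv
      rw [SimpleGraph.mem_neighborFinset] at hv
      have hyv : G.dist y v = 1 := SimpleGraph.dist_eq_one_iff_adj.mpr hv
      have hvy : G.dist v y = 1 := SimpleGraph.dist_eq_one_iff_adj.mpr hv.symm
      have h1 : G.dist x v ≤ G.dist x y + 1 := by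
        have := hG.dist_triangle (u := x) (v := y) (w := v)
        omega
      have h2 : G.dist x y ≤ G.dist x v + 1 := by
        have := hG.dist_triangle (u := x) (v := v) (w := y)
        omega
      rcases (by omega : G.dist x v = G.dist x y - 1 ∨ G.dist x v = G.dist x y
          ∨ G.dist x v = G.dist x y + 1) with h | h | h
      · rw [if_neg (by omega), if_pos h, h, Nat.cast_sub hn0]
        push_cast
        ring
      · rw [if_neg (by omega), if_neg (by omega), h]
        ring
      · rw [if_pos h, if_neg (by omega), h]
        push_cast
        ring
    rw [Finset.sum_congr rfl hsplit, Finset.sum_add_distrib, Finset.sum_const,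
      Finset.sum_sub_distrib, Finset.sum_boole, Finset.sum_boole,
      SimpleGraph.card_neighborFinset_eq_degree, nsmul_eq_mul]
    rw [hcm, hcp]
    ring
  have hsumy : ∀ α : ℝ, ∑ v, lazyWalk G α y v * (G.dist x v : ℝ)
      = α * G.dist x y + (1 - α) / G.degree y
          * ((G.dist x y : ℝ) * G.degree y + cp - cm) := by
    intro α
    rw [lazyWalk_sum_mul, hNy]
  have hWlb : ∀ α ∈ Set.Icc (0:ℝ) 1,
      (G.dist x y : ℝ) - (1 - α) * (1 + (cm - cp) / G.degree y) ≤ sInf (S α) := by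
    intro α hα
    refine le_csInf (hSne α hα) ?_
    rintro c ⟨A, hA, rfl⟩
    have h := hkey A _ _ hA
    rw [hsumx α, hsumy α] at h
    have e : (G.dist x y : ℝ) - (1 - α) * (1 + (cm - cp) / G.degree y)
        = α * G.dist x y + (1 - α) / G.degree y
            * ((G.dist x y : ℝ) * G.degree y + cp - cm) - (1 - α) := by
      field_simp
      ring
    rw [e]
    exact h
  have hWS : ∀ α : ℝ,
      W (fun a b => (G.dist a b : ℝ)) (lazyWalk G α x) (lazyWalk G α y) = sInf (S α) :=
    fun _ => rfl
  have hbound : ∀ α ∈ Set.Ico (0:ℝ) 1, kappaAlpha G α x y / (1 - α) ≤ B := by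
    intro α hα
    have h1α : (0:ℝ) < 1 - α := by linarith [hα.2]
    have hW := hWlb α ⟨hα.1, hα.2.le⟩
    have hk : kappaAlpha G α x y ≤ (1 - α) * B := by
      unfold kappaAlpha
      rw [hWS, hB]
      have hdiv : ((G.dist x y : ℝ) - (1 - α) * (1 + (cm - cp) / G.degree y)) / (G.dist x y : ℝ)
          ≤ sInf (S α) / (G.dist x y : ℝ) := by gcongr
      have e : 1 - ((G.dist x y : ℝ) - (1 - α) * (1 + (cm - cp) / G.degree y)) / (G.dist x y : ℝ)
          = (1 - α) * ((1 + (cm - cp) / ↑(G.degree y)) / ↑(G.dist x y)) := by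
        field_simp
        ring
      linarith [hdiv, e]
    rw [div_le_iff₀ h1α]
    linarith [hk]
  have hconv : ConvexOn ℝ (Set.Icc (0:ℝ) 1) (fun α => sInf (S α)) := by
    refine ⟨convex_Icc _ _, ?_⟩
    intro a ha b hb t s ht hs hts
    simp only [smul_eq_mul]
    refine le_of_forall_pos_le_add fun ε hε => ?_
    obtain ⟨c₁, hc₁, hc₁'⟩ := Real.lt_sInf_add_pos (hSne a ha) hε
    obtain ⟨c₂, hc₂, hc₂'⟩ := Real.lt_sInf_add_pos (hSne b hb) hε
    obtain ⟨A₁, hA₁, rfl⟩ := hc₁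
    obtain ⟨A₂, hA₂, rfl⟩ := hc₂
    have hmem : (t * (∑ p : V × V, A₁ p * (G.dist p.1 p.2 : ℝ))
        + s * ∑ p : V × V, A₂ p * (G.dist p.1 p.2 : ℝ)) ∈ S (t * a + s * b) := by
      refine ⟨fun p => t * A₁ p + s * A₂ p, ⟨?_, ?_, ?_⟩, ?_⟩
      · exact fun p => add_nonneg (mul_nonneg ht (hA₁.1 p)) (mul_nonneg hs (hA₂.1 p))
      · intro a'
        rw [lazyWalk_affine G a b t s hts, ← hA₁.2.1 a', ← hA₂.2.1 a',
          Finset.mul_sum, Finset.mul_sum, ← Finset.sum_add_distrib]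
      · intro b'
        rw [lazyWalk_affine G a b t s hts, ← hA₁.2.2 b', ← hA₂.2.2 b',
          Finset.mul_sum, Finset.mul_sum, ← Finset.sum_add_distrib]
      · rw [Finset.mul_sum, Finset.mul_sum, ← Finset.sum_add_distrib]
        exact Finset.sum_congr rfl fun p _ => by ring
    have hle := csInf_le (hSbdd _) hmem
    have h1 : t * (∑ p : V × V, A₁ p * (G.dist p.1 p.2 : ℝ)) ≤ t * (sInf (S a) + ε) :=
      mul_le_mul_of_nonneg_left hc₁'.le ht
    have h2 : s * (∑ p : V × V, A₂ p * (G.dist p.1 p.2 : ℝ)) ≤ s * (sInf (S b) + ε) :=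
      mul_le_mul_of_nonneg_left hc₂'.le hs
    have h3 : t * ε + s * ε = ε := by rw [← add_mul, hts, one_mul]
    calc sInf (S (t * a + s * b)) ≤ _ := hle
      _ ≤ t * (sInf (S a) + ε) + s * (sInf (S b) + ε) := add_le_add h1 h2
      _ = t * sInf (S a) + s * sInf (S b) + ε := by
          rw [mul_add, mul_add, add_add_add_comm, h3]
  have hδ : ∀ z v : V, lazyWalk G 1 z v = if v = z then 1 else 0 := by
    intro z v
    unfold lazyWalk
    split_ifs <;> norm_num
  have hmemd : ((G.dist x y : ℝ)) ∈ S 1 := by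
    refine ⟨fun p => if p = (x, y) then 1 else 0, ⟨?_, ?_, ?_⟩, ?_⟩
    · intro p; dsimp only; split_ifs <;> norm_num
    · intro a
      dsimp only
      rw [hδ]
      by_cases h : a = x
      · subst h; simp [Prod.ext_iff]
      · simp [Prod.ext_iff, h]
    · intro b
      dsimp only
      rw [hδ]
      by_cases h : b = y
      · subst h; simp [Prod.ext_iff]
      · simp [Prod.ext_iff, h]
    · dsimp only
      rw [Finset.sum_eq_single_of_mem (x, y) (Finset.mem_univ _)]
      · simp
      · intro p _ hp; rw [if_neg hp, zero_mul]
  have hS1 : sInf (S 1) = (G.dist x y : ℝ) := by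
    refine le_antisymm (csInf_le (hSbdd 1) hmemd) (le_csInf ⟨_, hmemd⟩ ?_)
    rintro c ⟨A, ⟨h0, h1, h2⟩, rfl⟩
    have hA0 : ∀ a, a ≠ x → A (a, y) = 0 := by
      intro a hax
      have hrow : ∑ b, A (a, b) = 0 := by rw [h1, hδ, if_neg hax]
      exact (Finset.sum_eq_zero_iff_of_nonneg (fun b _ => h0 (a, b))).mp hrow y
        (Finset.mem_univ _)
    have hxy1 : A (x, y) = 1 := by
      have hcol : ∑ a, A (a, y) = 1 := by rw [h2, hδ, if_pos rfl]
      rw [Finset.sum_eq_single_of_mem x (Finset.mem_univ _)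
        (fun a _ hax => hA0 a hax)] at hcol
      exact hcol
    calc (G.dist x y : ℝ) = A (x, y) * (G.dist x y : ℝ) := by rw [hxy1, one_mul]
      _ ≤ ∑ p : V × V, A p * (G.dist p.1 p.2 : ℝ) :=
        Finset.single_le_sum (f := fun p : V × V => A p * (G.dist p.1 p.2 : ℝ))
          (fun p _ => mul_nonneg (h0 p) (Nat.cast_nonneg _)) (Finset.mem_univ (x, y))
  have hmono : MonotoneOn (fun α => kappaAlpha G α x y / (1 - α)) (Set.Ico (0:ℝ) 1) := by
    intro a ha b hb hab
    have hsec := hconv.secant_mono (a := 1) (x := a) (y := b)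
      (Set.right_mem_Icc.mpr zero_le_one) ⟨ha.1, ha.2.le⟩ ⟨hb.1, hb.2.le⟩
      (ne_of_lt ha.2) (ne_of_lt hb.2) hab
    have hrw : ∀ α : ℝ, α < 1 → kappaAlpha G α x y / (1 - α)
        = ((sInf (S α) - sInf (S 1)) / (α - 1)) / (G.dist x y : ℝ) := by
      intro α hα1
      unfold kappaAlpha
      rw [hWS, hS1]
      have hne1 : α - 1 ≠ 0 := by intro h'; exact absurd (by linarith) hα1.ne
      have hne2 : (1:ℝ) - α ≠ 0 := by intro h'; exact absurd (by linarith) hα1.ne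
      field_simp
      ring
    simp only at hsec ⊢
    rw [hrw a ha.2, hrw b hb.2]
    exact (div_le_div_iff_of_pos_right hnR).mpr hsec
  set g : ℝ → ℝ := fun α => kappaAlpha G α x y / (1 - α) with hg
  set g' : ℝ → ℝ := fun α => g (max α 0) with hg'
  have hmem' : ∀ α : ℝ, α < 1 → max α 0 ∈ Set.Ico (0:ℝ) 1 :=
    fun α hα => ⟨le_max_right _ _, max_lt hα one_pos⟩
  have hg'mono : MonotoneOn g' (Set.Iio (1:ℝ)) := fun a ha b hb hab =>
    hmono (hmem' a ha) (hmem' b hb) (max_le_max hab le_rfl)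
  have hbdd : BddAbove (g' '' Set.Iio 1) := by
    refine ⟨B, ?_⟩
    rintro _ ⟨α, hα, rfl⟩
    exact hbound _ (hmem' α hα)
  have htend := hg'mono.tendsto_nhdsLT hbdd
  have hne : (nhdsWithin (1:ℝ) (Set.Ico (0:ℝ) 1)).NeBot := by
    rw [← mem_closure_iff_nhdsWithin_neBot, closure_Ico (by norm_num : (0:ℝ) ≠ 1)]
    exact ⟨by norm_num, le_refl 1⟩
  have htend2 : Filter.Tendsto g' (nhdsWithin 1 (Set.Ico (0:ℝ) 1))
      (nhds (sSup (g' '' Set.Iio 1))) :=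
    htend.mono_left (nhdsWithin_mono 1 Set.Ico_subset_Iio_self)
  have heq : g' =ᶠ[nhdsWithin 1 (Set.Ico (0:ℝ) 1)] g :=
    eventually_nhdsWithin_of_forall fun α hα => by
      simp only [hg']
      rw [max_eq_left hα.1]
  have htend3 : Filter.Tendsto g (nhdsWithin 1 (Set.Ico (0:ℝ) 1))
      (nhds (sSup (g' '' Set.Iio 1))) := htend2.congr' heq
  have hlly : kappaLLY G x y = sSup (g' '' Set.Iio 1) := by
    unfold kappaLLY
    rw [← hg]
    exact htend3.limUnder_eq
  rw [hlly]
  exact le_of_tendsto htend3 (Filter.eventually_iff_exists_mem.mpr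
    ⟨Set.Ico (0:ℝ) 1, self_mem_nhdsWithin, fun α hα => hbound α hα⟩)
end
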